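/- Let F → E → B be a fibration of path-connected CW-complexes. Then cat(E) + 1 ≤ (cat(B) + 1)(cat(F) + 1). -/

import Mathlib

open unitInterval Set ContinuousMap

universe u

/-- `X` admits a cover by `n+1` open sets, each contractible in `X`. -/
def NullCover (X : Type*) [TopologicalSpace X] (n : ℕ) : Prop :=
  ∃ U : Fin (n + 1) → Set X, (∀ i, IsOpen (U i)) ∧ (⋃ i, U i) = Set.univ ∧
    ∀ i, (⟨Subtype.val, continuous_subtype_val⟩ : C(U i, X)).Nullhomotopic

/-- The (reduced) Lusternik-Schnirelmann category, as an extended natural number. -/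
noncomputable def LScat (X : Type*) [TopologicalSpace X] : ℕ∞ :=
  sInf ((fun n : ℕ => (n : ℕ∞)) '' {n : ℕ | NullCover X n})

/-- A Hurewicz fibration: a map with the homotopy lifting property with respect to
all spaces. -/
def IsHurewiczFibration {E B : Type u} [TopologicalSpace E] [TopologicalSpace B]
    (p : C(E, B)) : Prop :=
  ∀ (Z : Type u) [TopologicalSpace Z] (h₀ : C(Z, E)) (H : C(Z × I, B)),
    (∀ z, H (z, 0) = p (h₀ z)) →
    ∃ G : C(Z × I, E), (∀ zt : Z × I, p (G zt) = H zt) ∧ ∀ z, G (z, 0) = h₀ z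

/-- `X` is a CW-complex: it is homeomorphic to the realization of a CW-complex
structure in the sense of Mathlib. -/
def HasCWStructure (X : Type u) [TopologicalSpace X] : Prop :=
  ∃ (Y : TopCat.{u}) (_ : TopCat.CWComplex Y), Nonempty (↑Y ≃ₜ X)

/-- Over a set `Uo` contractible in `B`, the inclusion of `p ⁻¹' Uo` into `E` is
homotopic to a map into the fiber over `b₀`. -/
lemma deform_to_fiber {E B : Type u} [TopologicalSpace E] [TopologicalSpace B]
    (p : C(E, B)) (b₀ : B) (hp : IsHurewiczFibration p) [PathConnectedSpace B]
    (Uo : Set B)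
    (hnull : (⟨Subtype.val, continuous_subtype_val⟩ : C(Uo, B)).Nullhomotopic) :
    ∃ r : C(↥(p ⁻¹' Uo), ↑(p ⁻¹' {b₀})),
      ((⟨Subtype.val, continuous_subtype_val⟩ : C(↥(p ⁻¹' Uo), E)).Homotopic
        ((⟨Subtype.val, continuous_subtype_val⟩ : C(↑(p ⁻¹' {b₀}), E)).comp r)) := by
  obtain ⟨y, hy⟩ := hnull
  obtain ⟨K⟩ := hy
  set Z := ↥(p ⁻¹' Uo)
  have hKcont : Continuous fun zt : Z × I => K (zt.2, ⟨p zt.1.1, zt.1.2⟩) := by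
    apply K.continuous.comp
    exact (continuous_snd).prodMk ((Continuous.subtype_mk
      (p.continuous.comp (continuous_subtype_val.comp continuous_fst)) _))
  obtain ⟨G₁, hG₁, hG₁0⟩ := hp Z ⟨Subtype.val, continuous_subtype_val⟩
    ⟨fun zt => K (zt.2, ⟨p zt.1.1, zt.1.2⟩), hKcont⟩
    (fun z => by simp [K.map_zero_left])
  obtain γ := PathConnectedSpace.somePath y b₀
  have hG₁1 : ∀ z : Z, p (G₁ (z, 1)) = y := by
    intro z
    have := hG₁ (z, 1)
    simpa [K.map_one_left] using this
  obtain ⟨G₂, hG₂, hG₂0⟩ := hp Z (⟨fun z => G₁ (z, 1), by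
      exact G₁.continuous.comp (continuous_id.prodMk continuous_const)⟩)
    ⟨fun zt => γ zt.2, γ.continuous.comp continuous_snd⟩
    (fun z => by simp [hG₁1 z])
  have hG₂1 : ∀ z : Z, p (G₂ (z, 1)) = b₀ := by
    intro z; simpa using hG₂ (z, 1)
  refine ⟨⟨fun z => ⟨G₂ (z, 1), hG₂1 z⟩, by
    exact Continuous.subtype_mk (G₂.continuous.comp (continuous_id.prodMk continuous_const)) _⟩, ?_⟩
  have h1 : ((⟨Subtype.val, continuous_subtype_val⟩ : C(Z, E)).Homotopic
      ⟨fun z => G₁ (z, 1), G₁.continuous.comp (continuous_id.prodMk continuous_const)⟩) := by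
    refine ⟨⟨⟨fun tz => G₁ (tz.2, tz.1), G₁.continuous.comp (continuous_snd.prodMk continuous_fst)⟩,
      fun z => hG₁0 z, fun z => rfl⟩⟩
  have h2 : ((⟨fun z => G₁ (z, 1), G₁.continuous.comp (continuous_id.prodMk continuous_const)⟩ :
      C(Z, E)).Homotopic ⟨fun z => G₂ (z, 1), G₂.continuous.comp (continuous_id.prodMk continuous_const)⟩) := by
    refine ⟨⟨⟨fun tz => G₂ (tz.2, tz.1), G₂.continuous.comp (continuous_snd.prodMk continuous_fst)⟩,
      fun z => hG₂0 z, fun z => rfl⟩⟩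
  exact (h1.trans h2).trans (by rw [show ((⟨Subtype.val, continuous_subtype_val⟩ :
    C(↑(p ⁻¹' {b₀}), E)).comp ⟨fun z => ⟨G₂ (z, 1), hG₂1 z⟩, _⟩) =
    ⟨fun z => G₂ (z, 1), G₂.continuous.comp (continuous_id.prodMk continuous_const)⟩ from
    ContinuousMap.ext fun z => rfl])

/-- The product inequality for null covers in a fibration. -/
lemma nullCover_fibration {E B : Type u} [TopologicalSpace E] [TopologicalSpace B]
    (p : C(E, B)) (b₀ : B) (hp : IsHurewiczFibration p) [PathConnectedSpace B]
    {m n : ℕ} (hB : NullCover B m) (hF : NullCover (↑(p ⁻¹' {b₀})) n) :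
    NullCover E (m * n + m + n) := by
  obtain ⟨U, hUopen, hUcover, hUnull⟩ := hB
  obtain ⟨V, hVopen, hVcover, hVnull⟩ := hF
  choose r hr using fun i => deform_to_fiber p b₀ hp (U i) (hUnull i)
  set W : Fin (m + 1) × Fin (n + 1) → Set E :=
    fun ij => Subtype.val '' (r ij.1 ⁻¹' (V ij.2)) with hW
  have hWopen : ∀ ij, IsOpen (W ij) := by
    intro ⟨i, j⟩
    exact ((hUopen i).preimage p.continuous).isOpenMap_subtype_val _
      ((hVopen j).preimage (r i).continuous)
  have hWcover : (⋃ ij, W ij) = Set.univ := by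
    refine eq_univ_iff_forall.2 fun e => ?_
    have he : p e ∈ ⋃ i, U i := by rw [hUcover]; trivial
    obtain ⟨i, hi⟩ := mem_iUnion.1 he
    have hre : r i ⟨e, hi⟩ ∈ ⋃ j, V j := by rw [hVcover]; trivial
    obtain ⟨j, hj⟩ := mem_iUnion.1 hre
    exact mem_iUnion.2 ⟨(i, j), ⟨⟨e, hi⟩, hj, rfl⟩⟩
  have hWnull : ∀ ij, (⟨Subtype.val, continuous_subtype_val⟩ : C(W ij, E)).Nullhomotopic := by
    rintro ⟨i, j⟩
    have hmem : ∀ w : ↥(W (i, j)), p w.1 ∈ U i := by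
      rintro ⟨w, z, hz, rfl⟩; exact z.2
    set q : C(↥(W (i, j)), ↥(p ⁻¹' (U i))) :=
      ⟨fun w => ⟨w.1, hmem w⟩, Continuous.subtype_mk continuous_subtype_val _⟩ with hq
    have hqV : ∀ w : ↥(W (i, j)), r i (q w) ∈ V j := by
      rintro ⟨w, z, hz, hzw⟩
      have : z = q ⟨w, z, hz, hzw⟩ := Subtype.ext hzw
      rwa [this] at hz
    set s : C(↥(W (i, j)), ↥(V j)) :=
      ⟨fun w => ⟨r i (q w), hqV w⟩,
        Continuous.subtype_mk ((r i).continuous.comp q.continuous) _⟩ with hs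
    obtain ⟨f, hf⟩ := hVnull j
    refine ⟨(f : ↑(p ⁻¹' {b₀})).1, ?_⟩
    have step1 : ((⟨Subtype.val, continuous_subtype_val⟩ : C(↥(W (i, j)), E)).Homotopic
        (((⟨Subtype.val, continuous_subtype_val⟩ : C(↑(p ⁻¹' {b₀}), E)).comp (r i)).comp q)) := by
      have := ((hr i).comp (ContinuousMap.Homotopic.refl q))
      convert this using 2
      rfl
    have step2 : ((((⟨Subtype.val, continuous_subtype_val⟩ :
          C(↑(p ⁻¹' {b₀}), E)).comp (r i)).comp q).Homotopic
        (ContinuousMap.const _ ((f : ↑(p ⁻¹' {b₀})).1))) := by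
      have heq : (((⟨Subtype.val, continuous_subtype_val⟩ :
          C(↑(p ⁻¹' {b₀}), E)).comp (r i)).comp q) =
          (((⟨Subtype.val, continuous_subtype_val⟩ : C(↑(p ⁻¹' {b₀}), E)).comp
            (⟨Subtype.val, continuous_subtype_val⟩ : C(↥(V j), ↑(p ⁻¹' {b₀})))).comp s) :=
        ContinuousMap.ext fun w => rfl
      rw [heq]
      have h3 := (((ContinuousMap.Homotopic.refl
          (⟨Subtype.val, continuous_subtype_val⟩ : C(↑(p ⁻¹' {b₀}), E))).comp hf).comp
        (ContinuousMap.Homotopic.refl s))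
      convert h3 using 2
      exact ContinuousMap.ext fun _ => rfl
    exact step1.trans step2
  have harith : (m + 1) * (n + 1) = m * n + m + n + 1 := by ring
  refine ⟨fun k => W ((finProdFinEquiv.symm) (Fin.cast harith.symm k)), fun k => hWopen _, ?_,
    fun k => hWnull _⟩
  refine eq_univ_iff_forall.2 fun e => ?_
  have he : e ∈ ⋃ ij, W ij := by rw [hWcover]; trivial
  obtain ⟨ij, hij⟩ := mem_iUnion.1 he
  refine mem_iUnion.2 ⟨Fin.cast harith (finProdFinEquiv ij), ?_⟩
  simpa using hij

lemma LScat_le {X : Type*} [TopologicalSpace X] {n : ℕ} (h : NullCover X n) :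
    LScat X ≤ n := sInf_le ⟨n, h, rfl⟩

lemma LScat_eq_top_or_exists (X : Type*) [TopologicalSpace X] :
    LScat X = ⊤ ∨ ∃ n : ℕ, NullCover X n ∧ LScat X = n := by
  by_cases hne : {n : ℕ | NullCover X n}.Nonempty
  · right
    refine ⟨sInf {n : ℕ | NullCover X n}, Nat.sInf_mem hne, ?_⟩
    refine le_antisymm (LScat_le (Nat.sInf_mem hne)) (le_sInf ?_)
    rintro x ⟨k, hk, rfl⟩
    simpa using (Nat.cast_le (α := ℕ∞)).2 (Nat.sInf_le hk)
  · left
    rw [Set.not_nonempty_iff_eq_empty] at hne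
    simp [LScat, hne]

/-- LS-category in a fibration `F → E → B` of path-connected CW-complexes:
`cat(E) + 1 ≤ (cat(B) + 1)(cat(F) + 1)`. -/
theorem lscat_fibration {E B : Type u} [TopologicalSpace E] [TopologicalSpace B]
    (p : C(E, B)) (b₀ : B) (hp : IsHurewiczFibration p)
    [PathConnectedSpace E] [PathConnectedSpace B]
    [PathConnectedSpace ↑(p ⁻¹' {b₀})]
    (hE : HasCWStructure E) (hB : HasCWStructure B)
    (hF : HasCWStructure ↑(p ⁻¹' {b₀})) :
    LScat E + 1 ≤ (LScat B + 1) * (LScat ↑(p ⁻¹' {b₀}) + 1) := by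
  rcases LScat_eq_top_or_exists B with hBtop | ⟨m, hm, hmB⟩
  · rw [hBtop, top_add, ENat.top_mul (by
      intro h
      exact (one_ne_zero (α := ℕ∞)) (le_antisymm (h ▸ le_add_self) zero_le))]
    exact le_top
  rcases LScat_eq_top_or_exists ↑(p ⁻¹' {b₀}) with hFtop | ⟨n, hn, hnF⟩
  · rw [hFtop, top_add, ENat.mul_top (by
      intro h
      exact (one_ne_zero (α := ℕ∞)) (le_antisymm (h ▸ le_add_self) zero_le))]
    exact le_top
  have key := nullCover_fibration p b₀ hp hm hn
  have hle : LScat E ≤ (m * n + m + n : ℕ) := LScat_le key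
  rw [hmB, hnF]
  calc LScat E + 1 ≤ ((m * n + m + n : ℕ) : ℕ∞) + 1 := add_le_add_left hle 1
    _ = (((m + 1) * (n + 1) : ℕ) : ℕ∞) := by
        rw [show (m + 1) * (n + 1) = m * n + m + n + 1 from by ring]; push_cast; ring
    _ = ((m : ℕ∞) + 1) * ((n : ℕ∞) + 1) := by push_cast; ring
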